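/- Let F be a field, n ≥ 1, V = (ℤ^n × Fin n) →₀ F with basis Y_{b,i} and commuting shift operators T_j(Y_{b,i}) = Y_{b − e_j,i}. Fix i ∈ {1,…,n} and let U be an F-subspace of V such that Y_{b,i} ∈ U for all but finitely many b ∈ ℤ^n. Suppose there exists a nonzero polynomial f ∈ F[W_i,…,W_n] such that f(T_i,…,T_n)(Y_{b,i}) ∈ U for every b ∈ ℤ^n. Then Y_{b,i} ∈ U for every b ∈ ℤ^n. -/

import Mathlib

/-- The basis vector `Y_{b,i}` of `(ℤ^n × Fin n) →₀ F`. -/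
noncomputable def YV (F : Type*) [Field F] (n : ℕ) (b : Fin n → ℤ) (i : Fin n) :
    ((Fin n → ℤ) × Fin n) →₀ F :=
  Finsupp.single (b, i) 1

/-- Evaluation of a polynomial `f` at the commuting shift operators
`T_1, …, T_n`, where `T_j (Y_{b,i}) = Y_{b - e_j, i}`: each monomial `W^d` acts as
the shift by `d`. -/
noncomputable def polyShift (F : Type*) [Field F] (n : ℕ)
    (f : MvPolynomial (Fin n) F) :
    Module.End F (((Fin n → ℤ) × Fin n) →₀ F) :=
  ∑ d ∈ f.support, MvPolynomial.coeff d f •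
    Finsupp.lmapDomain F F (fun p => (fun j => p.1 j - (d j : ℤ), p.2))

theorem stmt_10 (F : Type*) [Field F] (n : ℕ) (hn : 1 ≤ n)
    (U : Submodule F (((Fin n → ℤ) × Fin n) →₀ F))
    (i : Fin n)
    (hfin : {b : Fin n → ℤ | YV F n b i ∉ U}.Finite)
    (f : MvPolynomial (Fin n) F) (hf : f ≠ 0)
    (hvars : ∀ j : Fin n, j < i → MvPolynomial.degreeOf j f = 0)
    (hU : ∀ b : Fin n → ℤ, polyShift F n f (YV F n b i) ∈ U) :
    ∀ b : Fin n → ℤ, YV F n b i ∈ U := by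
  letI LO : LinearOrder (Lex (Fin n → ℤ)) := inferInstance
  by_contra hcon
  push_neg at hcon
  have hS : hfin.toFinset.Nonempty := by
    obtain ⟨b, hb⟩ := hcon; exact ⟨b, hfin.mem_toFinset.2 hb⟩
  obtain ⟨b, hbS, hbmax⟩ := @Finset.exists_max_image (Lex (Fin n → ℤ)) _ LO hfin.toFinset (fun b => toLex b) hS
  have hsupp : f.support.Nonempty := MvPolynomial.support_nonempty.2 hf
  obtain ⟨d₀, hd₀, hd₀max⟩ :=
    @Finset.exists_max_image (Lex (Fin n → ℤ)) _ LO f.support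
      (fun d => toLex (fun j => (d j : ℤ))) hsupp
  set c : Fin n → ℤ := fun j => b j + (d₀ j : ℤ) with hc
  have happ : polyShift F n f (YV F n c i) =
      ∑ d ∈ f.support, MvPolynomial.coeff d f • YV F n (fun j => c j - (d j : ℤ)) i := by
    simp [polyShift, YV, LinearMap.sum_apply, Finsupp.lmapDomain_apply, Finsupp.mapDomain_single]
  have key : (∑ d ∈ f.support,
      MvPolynomial.coeff d f • YV F n (fun j => c j - (d j : ℤ)) i) ∈ U := by
    rw [← happ]; exact hU c
  have hsplit := Finset.sum_erase_add f.support
    (fun d => MvPolynomial.coeff d f • YV F n (fun j => c j - (d j : ℤ)) i) hd₀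
  have hback : (fun j => c j - (d₀ j : ℤ)) = b := by
    funext j; simp [hc]
  have herase : (∑ d ∈ f.support.erase d₀,
      MvPolynomial.coeff d f • YV F n (fun j => c j - (d j : ℤ)) i) ∈ U := by
    refine Submodule.sum_mem U fun d hd => Submodule.smul_mem U _ ?_
    obtain ⟨hne, hdsupp⟩ := Finset.mem_erase.1 hd
    have hlt : toLex (fun j => (d j : ℤ)) < toLex (fun j => (d₀ j : ℤ)) := by
      refine lt_of_le_of_ne (hd₀max d hdsupp) fun heq => hne ?_
      have := toLex.injective heq
      ext j
      have := congrFun this j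
      exact_mod_cast this
    have hgt : toLex b < toLex (fun j => c j - (d j : ℤ)) := by
      have h1 : (fun j => c j - (d j : ℤ)) =
          b + ((fun j => (d₀ j : ℤ)) - fun j => (d j : ℤ)) := by
        funext j; simp [hc]; ring
      rw [h1]
      have h2 : (0 : Lex (Fin n → ℤ)) <
          toLex ((fun j => (d₀ j : ℤ)) - fun j => (d j : ℤ)) := by
        have := sub_pos.2 hlt
        exact this
      calc toLex b = toLex b + 0 := by rw [add_zero]
        _ < toLex b + toLex ((fun j => (d₀ j : ℤ)) - fun j => (d j : ℤ)) :=
            add_lt_add_right h2 _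
        _ = toLex (b + ((fun j => (d₀ j : ℤ)) - fun j => (d j : ℤ))) := rfl
    by_contra hnotin
    have hmem : (fun j => c j - (d j : ℤ)) ∈ hfin.toFinset := hfin.mem_toFinset.2 hnotin
    exact absurd (hbmax _ hmem) (not_le.2 hgt)
  have hd₀term : MvPolynomial.coeff d₀ f • YV F n b i ∈ U := by
    have : MvPolynomial.coeff d₀ f • YV F n (fun j => c j - (d₀ j : ℤ)) i =
        (∑ d ∈ f.support,
          MvPolynomial.coeff d f • YV F n (fun j => c j - (d j : ℤ)) i) -
        (∑ d ∈ f.support.erase d₀,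
          MvPolynomial.coeff d f • YV F n (fun j => c j - (d j : ℤ)) i) := by
      rw [← hsplit]; abel
    rw [← hback, this]
    exact Submodule.sub_mem U key herase
  have hc0 : MvPolynomial.coeff d₀ f ≠ 0 := MvPolynomial.mem_support_iff.1 hd₀
  have : YV F n b i ∈ U := by
    have := Submodule.smul_mem U (MvPolynomial.coeff d₀ f)⁻¹ hd₀term
    rwa [smul_smul, inv_mul_cancel₀ hc0, one_smul] at this
  exact absurd this (hfin.mem_toFinset.1 hbS)
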